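/- Let S be a contractible P-polyhedral system with attractor K, and let j ∈ I* be a multiindex. For any continuum (compact connected set) L ⊆ K meeting both P_j and the exterior of P_j, the set closure(L \ P_j) ∩ P_j is contained in S_j(V_P), the vertex set of the polyhedron P_j. -/

import Mathlib

open Set

/-- `S` is a `P`-polyhedral system with vertex set `V`: the maps are contraction
similarities, each `Pᵢ = Sᵢ(P)` lies in `P`, distinct `Pᵢ, Pⱼ` meet in at most one
point which is then a common vertex, and every vertex of `P` is a vertex of some
`Pᵢ`. -/
def IsPPolyhedralSystem {d : ℕ} {ι : Type*} (P : Set (EuclideanSpace ℝ (Fin d)))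
    (V : Finset (EuclideanSpace ℝ (Fin d)))
    (S : ι → EuclideanSpace ℝ (Fin d) → EuclideanSpace ℝ (Fin d)) : Prop :=
  (∀ i, ∃ r ∈ Set.Ioo (0 : ℝ) 1, ∀ x y, dist (S i x) (S i y) = r * dist x y) ∧
  (∀ i, S i '' P ⊆ P) ∧
  (∀ i j, i ≠ j → (S i '' P ∩ S j '' P = ∅ ∨
    ∃ v, S i '' P ∩ S j '' P = {v} ∧ v ∈ S i '' (V : Set (EuclideanSpace ℝ (Fin d))) ∧
      v ∈ S j '' (V : Set (EuclideanSpace ℝ (Fin d))))) ∧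
  ((V : Set (EuclideanSpace ℝ (Fin d))) ⊆
    ⋃ i, S i '' (V : Set (EuclideanSpace ℝ (Fin d))))

/-- The polyhedron data: `P` is a compact set homeomorphic to the closed `d`-ball, with
finite vertex set `V ⊆ P`. -/
def IsPolyhedronWithVertices {d : ℕ} (P : Set (EuclideanSpace ℝ (Fin d)))
    (V : Finset (EuclideanSpace ℝ (Fin d))) : Prop :=
  IsCompact P ∧ (V : Set (EuclideanSpace ℝ (Fin d))) ⊆ P ∧
    Nonempty (P ≃ₜ Metric.closedBall (0 : EuclideanSpace ℝ (Fin d)) 1)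

/-- The composition `S_{j₁} ∘ ⋯ ∘ S_{jₙ}` associated to a multiindex `j`. -/
def Sw {d : ℕ} {ι : Type*} (S : ι → EuclideanSpace ℝ (Fin d) → EuclideanSpace ℝ (Fin d)) :
    List ι → EuclideanSpace ℝ (Fin d) → EuclideanSpace ℝ (Fin d) :=
  fun l => l.foldr (fun i f => S i ∘ f) id

section Aux

variable {d m : ℕ} {P : Set (EuclideanSpace ℝ (Fin d))}
  {V : Finset (EuclideanSpace ℝ (Fin d))}
  {S : Fin m → EuclideanSpace ℝ (Fin d) → EuclideanSpace ℝ (Fin d)}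

lemma Sw_nil : Sw S ([] : List (Fin m)) = id := rfl

lemma Sw_cons (a : Fin m) (t : List (Fin m)) : Sw S (a :: t) = S a ∘ Sw S t := rfl

lemma aux_inj (hS : IsPPolyhedralSystem P V S) (i : Fin m) : Function.Injective (S i) := by
  obtain ⟨r, ⟨hr0, _⟩, hd⟩ := hS.1 i
  intro x y h
  have h2 := hd x y
  rw [h, dist_self] at h2
  have : dist x y = 0 := by
    by_contra hne
    have : 0 < dist x y := lt_of_le_of_ne dist_nonneg (Ne.symm hne)
    nlinarith
  exact dist_eq_zero.mp this

lemma Sw_inj (hS : IsPPolyhedralSystem P V S) (w : List (Fin m)) :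
    Function.Injective (Sw S w) := by
  induction w with
  | nil => exact fun x y h => h
  | cons a t ih => rw [Sw_cons]; exact (aux_inj hS a).comp ih

lemma SwP_subset (hS : IsPPolyhedralSystem P V S) (w : List (Fin m)) :
    Sw S w '' P ⊆ P := by
  induction w with
  | nil => simp [Sw_nil]
  | cons a t ih =>
    rw [Sw_cons, Set.image_comp]
    exact (Set.image_mono (f := S a) ih).trans (hS.2.1 a)

lemma sep_lemma (hS : IsPPolyhedralSystem P V S) {i k : Fin m} (h : i ≠ k)
    {x : EuclideanSpace ℝ (Fin d)} (hxi : x ∈ S i '' P) (hxk : x ∈ S k '' P) :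
    x ∈ S i '' (V : Set (EuclideanSpace ℝ (Fin d))) ∧
      x ∈ S k '' (V : Set (EuclideanSpace ℝ (Fin d))) := by
  rcases hS.2.2.1 i k h with he | ⟨v, hv, hvi, hvk⟩
  · exact absurd (he ▸ (⟨hxi, hxk⟩ : x ∈ S i '' P ∩ S k '' P)) (Set.notMem_empty x)
  · have : x ∈ ({v} : Set (EuclideanSpace ℝ (Fin d))) := hv ▸ ⟨hxi, hxk⟩
    rw [Set.mem_singleton_iff] at this
    subst this
    exact ⟨hvi, hvk⟩

lemma V_in_Sw (hP2 : (V : Set (EuclideanSpace ℝ (Fin d))) ⊆ P)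
    (hS : IsPPolyhedralSystem P V S) :
    ∀ (w : List (Fin m)) (u : EuclideanSpace ℝ (Fin d)),
      u ∈ (V : Set (EuclideanSpace ℝ (Fin d))) → u ∈ Sw S w '' P →
      u ∈ Sw S w '' (V : Set (EuclideanSpace ℝ (Fin d))) := by
  intro w
  induction w with
  | nil => intro u hu _; simpa [Sw_nil] using hu
  | cons a t ih =>
    intro u hu huP
    obtain ⟨i, hi⟩ := Set.mem_iUnion.mp (hS.2.2.2 hu)
    rw [Sw_cons, Set.image_comp] at huP ⊢
    have key : u ∈ S a '' (V : Set (EuclideanSpace ℝ (Fin d))) := by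
      by_cases hia : i = a
      · exact hia ▸ hi
      · have huiP : u ∈ S i '' P := Set.image_mono (f := S i) hP2 hi
        have huaP : u ∈ S a '' P := Set.image_mono (f := S a) (SwP_subset hS t) huP
        exact (sep_lemma hS hia huiP huaP).2
    obtain ⟨u', hu', huu'⟩ := key
    obtain ⟨z, hz, hzu⟩ := huP
    have : u' = z := aux_inj hS a (by rw [huu', hzu])
    subst this
    exact ⟨u', ih u' hu' hz, huu'⟩

lemma cells_meet_in_vertices (hP2 : (V : Set (EuclideanSpace ℝ (Fin d))) ⊆ P)
    (hS : IsPPolyhedralSystem P V S) :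
    ∀ (j w : List (Fin m)), j.length = w.length → j ≠ w →
      ∀ x, x ∈ Sw S j '' P → x ∈ Sw S w '' P →
        x ∈ Sw S j '' (V : Set (EuclideanSpace ℝ (Fin d))) := by
  intro j
  induction j with
  | nil =>
    intro w hlen hne x _ _
    exact absurd (List.length_eq_zero_iff.mp hlen.symm).symm hne
  | cons a jt ih =>
    intro w hlen hne x hxj hxw
    match w with
    | [] => simp at hlen
    | b :: wt =>
      rw [Sw_cons, Set.image_comp] at hxj ⊢
      rw [Sw_cons, Set.image_comp] at hxw
      by_cases hab : a = b
      · subst hab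
        obtain ⟨y, hy, hyx⟩ := hxj
        obtain ⟨z, hz, hzx⟩ := hxw
        have hyz : y = z := aux_inj hS a (by rw [hyx, hzx])
        subst hyz
        have hne' : jt ≠ wt := fun h => hne (by rw [h])
        have hlen' : jt.length = wt.length := by simpa using hlen
        exact ⟨y, ih wt hlen' hne' y hy hz, hyx⟩
      · have hxaP : x ∈ S a '' P := Set.image_mono (f := S a) (SwP_subset hS jt) hxj
        have hxbP : x ∈ S b '' P := Set.image_mono (f := S b) (SwP_subset hS wt) hxw
        obtain ⟨u, hu, hux⟩ := (sep_lemma hS hab hxaP hxbP).1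
        obtain ⟨y, hy, hyx⟩ := hxj
        have : u = y := aux_inj hS a (by rw [hux, hyx])
        subst this
        exact ⟨u, V_in_Sw hP2 hS jt u hu hy, hux⟩

end Aux

section Aux2

variable {d m : ℕ} {P : Set (EuclideanSpace ℝ (Fin d))}
  {V : Finset (EuclideanSpace ℝ (Fin d))}
  {S : Fin m → EuclideanSpace ℝ (Fin d) → EuclideanSpace ℝ (Fin d)}
  {K : Set (EuclideanSpace ℝ (Fin d))}

lemma level_decomp (hKinv : K = ⋃ i, S i '' K) (n : ℕ) :
    ∀ x ∈ K, ∃ w : List (Fin m), w.length = n ∧ x ∈ Sw S w '' K := by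
  induction n with
  | zero => intro x hx; exact ⟨[], rfl, by simpa [Sw_nil] using hx⟩
  | succ n ih =>
    intro x hx
    rw [hKinv] at hx
    obtain ⟨i, y, hy, hyx⟩ := Set.mem_iUnion.mp hx
    obtain ⟨w, hwlen, z, hz, hzy⟩ := ih y hy
    exact ⟨i :: w, by simp [hwlen], z, hz, by rw [Sw_cons, Function.comp_apply, hzy]; exact hyx⟩

lemma K_subset_P (hS : IsPPolyhedralSystem P V S) (hPc : IsCompact P)
    (hPne : P.Nonempty) (hKne : K.Nonempty) (hKc : IsCompact K)
    (hKinv : K = ⋃ i, S i '' K) : K ⊆ P := by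
  have hm : Nonempty (Fin m) := by
    obtain ⟨x, hx⟩ := hKne
    rw [hKinv] at hx
    obtain ⟨i, _⟩ := Set.mem_iUnion.mp hx
    exact ⟨i⟩
  choose r hr hd using hS.1
  set c : ℝ := Finset.univ.sup' (Finset.univ_nonempty) r with hc
  have hci : ∀ i, r i ≤ c := fun i => Finset.le_sup' r (Finset.mem_univ i)
  have hc0 : 0 ≤ c := le_trans (le_of_lt (hr (Classical.arbitrary _)).1) (hci _)
  have hc1 : c < 1 := by
    rw [hc, Finset.sup'_lt_iff]
    exact fun i _ => (hr i).2
  have hcontr : ∀ (w : List (Fin m)) (x y : EuclideanSpace ℝ (Fin d)),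
      dist (Sw S w x) (Sw S w y) ≤ c ^ w.length * dist x y := by
    intro w
    induction w with
    | nil => intro x y; simp [Sw_nil]
    | cons a t ih =>
      intro x y
      rw [Sw_cons]
      simp only [Function.comp_apply, List.length_cons]
      rw [hd a]
      calc r a * dist (Sw S t x) (Sw S t y) ≤ c * (c ^ t.length * dist x y) :=
            mul_le_mul (hci a) (ih x y) dist_nonneg hc0
        _ = c ^ (t.length + 1) * dist x y := by ring
  obtain ⟨p, hp⟩ := hPne
  obtain ⟨R, hR⟩ := hKc.isBounded.subset_closedBall p
  intro x hx
  have key : ∀ n : ℕ, Metric.infDist x P ≤ c ^ n * R := by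
    intro n
    obtain ⟨w, hwlen, y, hy, hyx⟩ := level_decomp hKinv n x hx
    have hSwp : Sw S w p ∈ P := SwP_subset hS w ⟨p, hp, rfl⟩
    have h1 : Metric.infDist x P ≤ dist x (Sw S w p) := Metric.infDist_le_dist_of_mem hSwp
    have h2 : dist x (Sw S w p) ≤ c ^ n * dist y p := by
      rw [← hyx, ← hwlen]; exact hcontr w y p
    have h3 : dist y p ≤ R := by simpa [Metric.mem_closedBall] using hR hy
    calc Metric.infDist x P ≤ c ^ n * dist y p := h1.trans h2
      _ ≤ c ^ n * R := mul_le_mul_of_nonneg_left h3 (pow_nonneg hc0 n)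
  have htend : Filter.Tendsto (fun n : ℕ => c ^ n * R) Filter.atTop (nhds 0) := by
    have := (tendsto_pow_atTop_nhds_zero_of_lt_one hc0 hc1).mul_const R
    simpa using this
  have hle : Metric.infDist x P ≤ 0 := ge_of_tendsto' htend key
  have : Metric.infDist x P = 0 := le_antisymm hle (Metric.infDist_nonneg)
  exact (hPc.isClosed.mem_iff_infDist_zero ⟨p, hp⟩).mpr this

end Aux2

lemma Sw_continuous {d m : ℕ} {P : Set (EuclideanSpace ℝ (Fin d))}
    {V : Finset (EuclideanSpace ℝ (Fin d))}
    {S : Fin m → EuclideanSpace ℝ (Fin d) → EuclideanSpace ℝ (Fin d)}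
    (hS : IsPPolyhedralSystem P V S) (w : List (Fin m)) : Continuous (Sw S w) := by
  induction w with
  | nil => exact continuous_id
  | cons a t ih =>
    rw [Sw_cons]
    obtain ⟨r, ⟨_, hr1⟩, hd⟩ := hS.1 a
    have : LipschitzWith 1 (S a) := by
      apply LipschitzWith.of_dist_le_mul
      intro x y
      rw [hd x y, NNReal.coe_one, one_mul]
      exact mul_le_of_le_one_left dist_nonneg (le_of_lt hr1)
    exact this.continuous.comp ih


theorem stmt_14 {d m : ℕ} (P : Set (EuclideanSpace ℝ (Fin d)))
    (V : Finset (EuclideanSpace ℝ (Fin d)))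
    (S : Fin m → EuclideanSpace ℝ (Fin d) → EuclideanSpace ℝ (Fin d))
    (hP : IsPolyhedronWithVertices P V)
    (hS : IsPPolyhedralSystem P V S)
    (hcontr : ContractibleSpace ↥(⋃ i, S i '' P))
    (K : Set (EuclideanSpace ℝ (Fin d))) (hKne : K.Nonempty) (hKc : IsCompact K)
    (hKinv : K = ⋃ i, S i '' K)
    (j : List (Fin m))
    (L : Set (EuclideanSpace ℝ (Fin d))) (hLK : L ⊆ K)
    (hLc : IsCompact L) (hLconn : IsConnected L)
    (hL1 : (L ∩ Sw S j '' P).Nonempty)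
    (hL2 : (L ∩ interior (Sw S j '' P)ᶜ).Nonempty) :
    closure (L \ Sw S j '' P) ∩ Sw S j '' P ⊆
      Sw S j '' (V : Set (EuclideanSpace ℝ (Fin d))) := by
  obtain ⟨hPc, hVP, ⟨e⟩⟩ := hP
  have hPne : P.Nonempty := by
    have h0 : (0 : EuclideanSpace ℝ (Fin d)) ∈ Metric.closedBall (0 : EuclideanSpace ℝ (Fin d)) 1 := by
      simp
    exact ⟨(e.symm ⟨0, h0⟩ : P), (e.symm ⟨0, h0⟩).2⟩
  have hKP : K ⊆ P := K_subset_P hS hPc hPne hKne hKc hKinv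
  set n := j.length with hn
  set W : Set (List (Fin m)) := {w : List (Fin m) | w.length = n ∧ w ≠ j} with hW
  have hWfin : W.Finite := (List.finite_length_eq (Fin m) n).subset (fun w hw => hw.1)
  set A : Set (EuclideanSpace ℝ (Fin d)) := ⋃ w ∈ W, Sw S w '' P with hA
  have hAclosed : IsClosed A :=
    hWfin.isClosed_biUnion (fun w _ => (hPc.image (Sw_continuous hS w)).isClosed)
  have hsub : L \ Sw S j '' P ⊆ A := by
    rintro y ⟨hyL, hyj⟩
    obtain ⟨w, hwlen, hy⟩ := level_decomp hKinv n y (hLK hyL)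
    have hyPw : y ∈ Sw S w '' P := Set.image_mono hKP hy
    have hwj : w ≠ j := fun h => hyj (h ▸ hyPw)
    exact Set.mem_biUnion ⟨hwlen, hwj⟩ hyPw
  rintro x ⟨hx1, hx2⟩
  have hxA : x ∈ A := hAclosed.closure_subset ((closure_mono hsub) hx1)
  obtain ⟨w, ⟨hwlen, hwj⟩, hxPw⟩ := Set.mem_iUnion₂.mp hxA
  exact cells_meet_in_vertices hVP hS j w hwlen.symm (fun h => hwj h.symm) x hx2 hxPw
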